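/- In any orientation of a complete bipartite graph, if partite set V1 is not dominated by V2 (no vertex of V2 pecks all of V1), then any vertex of V1 with maximal out-degree within V1 is a 3-Duke. -/
import Mathlib


/-- An orientation of a complete multipartite graph: vertices `V`, partite sets
given as fibers of `part : V → ι`, and `peck` the arc relation. Between any two
vertices in different partite sets there is exactly one arc, and there are no
arcs within a partite set. -/
structure MTour (V : Type*) (ι : Type*) where
  part : V → ι
  peck : V → V → Prop
  complete : ∀ u v, part u ≠ part v → peck u v ∨ peck v u
  inter : ∀ u v, peck u v → part u ≠ part v
  asymm : ∀ u v, peck u v → ¬ peck v u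

namespace MTour

variable {V ι : Type*}

/-- There is a directed path of length at most `m` from `d` to `c`. -/
def hasPath (T : MTour V ι) (m : ℕ) (d c : V) : Prop :=
  ∃ k ≤ m, ∃ f : ℕ → V, f 0 = d ∧ f k = c ∧ ∀ i < k, T.peck (f i) (f (i + 1))

/-- `d` is an `m`-Duke: every vertex in a different partite set is reachable
from `d` by a directed path of length at most `m`. -/
def isDuke (T : MTour V ι) (m : ℕ) (d : V) : Prop :=
  ∀ c, T.part c ≠ T.part d → T.hasPath m d c

/-- `d` is an `m`-King: every other vertex is reachable from `d` by a directed
path of length at most `m`. -/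
def isKing (T : MTour V ι) (m : ℕ) (d : V) : Prop :=
  ∀ c, c ≠ d → T.hasPath m d c

/-- The out-degree of a vertex. -/
noncomputable def outDeg (T : MTour V ι) (v : V) : ℕ :=
  Nat.card {w // T.peck v w}

/-- `e` eclipses `d`: same partite set, `e` pecks everything `d` pecks, and
at least one vertex `d` does not peck. -/
def eclipses (T : MTour V ι) (e d : V) : Prop :=
  T.part e = T.part d ∧ (∀ c, T.peck d c → T.peck e c) ∧ ∃ c, T.peck e c ∧ ¬ T.peck d c

/-- `d` is non-eclipsed: no vertex of its partite set eclipses it. -/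
def nonEclipsed (T : MTour V ι) (d : V) : Prop :=
  ∀ e, ¬ T.eclipses e d

/-- Partite set `i` dominates partite set `j`: some vertex of `i` pecks all of `j`. -/
def Dominates (T : MTour V ι) (i j : ι) : Prop :=
  ∃ v, T.part v = i ∧ ∀ w, T.part w = j → T.peck v w

end MTour

/-- In a bipartite tournament, if partite set `b` is not dominated by the
other partite set, then any vertex of partite set `b` of maximal out-degree
within `b` is a 3-Duke. -/
theorem stmt2 {V : Type*} [Finite V] (T : MTour V Bool) (b : Bool)
    (hnodom : ¬ ∃ v, T.part v ≠ b ∧ ∀ w, T.part w = b → T.peck v w)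
    (d : V) (hd : T.part d = b)
    (hprom : ∀ w, T.part w = b → T.outDeg w ≤ T.outDeg d) :
    T.isDuke 3 d := by
  intro c hc
  by_cases hdc : T.peck d c
  · refine ⟨1, by norm_num, fun n => if n = 0 then d else c, by simp, by simp, ?_⟩
    intro i hi
    interval_cases i
    simpa using hdc
  push_neg at hnodom
  have hcb : T.part c ≠ b := by rw [hd] at hc; exact hc
  obtain ⟨w, hwb, hcw⟩ := hnodom c hcb
  have hwc : T.peck w c := by
    rcases T.complete w c (by rw [hwb]; exact fun h => hcb h.symm) with h | h
    · exact h
    · exact absurd h hcw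
  by_cases hpath : ∃ a, T.peck d a ∧ T.peck a w
  · obtain ⟨a, hda, haw⟩ := hpath
    refine ⟨3, le_refl _, fun n => match n with
      | 0 => d | 1 => a | 2 => w | _ => c, rfl, rfl, ?_⟩
    intro i hi
    interval_cases i
    · exact hda
    · exact haw
    · exact hwc
  push_neg at hpath
  exfalso
  have hsub : ∀ a, T.peck d a → T.peck w a := by
    intro a hda
    have hab : T.part a ≠ b := by
      intro h; exact T.inter d a hda (hd.trans h.symm)
    rcases T.complete w a (by rw [hwb]; exact fun h => hab h.symm) with h | h
    · exact h
    · exact absurd h (hpath a hda)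
  have hlt : T.outDeg d < T.outDeg w := by
    unfold MTour.outDeg
    show Nat.card ({a | T.peck d a} : Set V) < Nat.card ({a | T.peck w a} : Set V)
    rw [Nat.card_coe_set_eq, Nat.card_coe_set_eq]
    apply Set.ncard_lt_ncard _ (Set.toFinite _)
    constructor
    · intro a hda; exact hsub a hda
    · intro hss
      exact hdc (hss hwc)
  exact absurd (hprom w hwb) (not_le.mpr hlt)
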